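/- The generating function of p-fountains satisfies the closed recursive form F(q,z) = (qz)^{p-1} / (1 - qz F(q,qz)) + (1 - (qz)^{p-1})/(1 - qz), as an identity of formal power series. -/

import Mathlib

/-- A `p`-fountain: an arrangement of coins in rows. `rows i` is the set of positions of
coins in row `i` (row `0` is the bottom row). The bottom row consists of consecutive coins,
and each coin in a higher row has exactly `p+1` descendant coins immediately below it
(so two horizontally adjacent coins share exactly `p` common descendants). -/
structure Fountain (p : ℕ) where
  rows : ℕ → Finset ℕ
  bottom_consecutive : rows 0 = Finset.range (rows 0).card
  supported : ∀ i j, j ∈ rows (i + 1) → ∀ d ≤ p, j + d ∈ rows i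

namespace Fountain
variable {p : ℕ}

/-- The length of the bottom row. -/
def width (F : Fountain p) : ℕ := (F.rows 0).card

/-- The total number of coins. (For `p ≥ 1` all rows above row `width` are empty.) -/
def coins (F : Fountain p) : ℕ := ∑ i ∈ Finset.range (F.width + 1), (F.rows i).card

/-- A fountain is primitive if its next-to-bottom row is full, i.e. has `width - p` coins
(in particular this requires `width ≥ p`). -/
def Primitive (F : Fountain p) : Prop :=
  p ≤ F.width ∧ F.rows 1 = Finset.range (F.width - p)

end Fountain

/-- `fcount p n k` = number of `(n,k)` `p`-fountains. -/
noncomputable def fcount (p n k : ℕ) : ℕ :=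
  Set.ncard {F : Fountain p | F.coins = n ∧ F.width = k}

/-- `gcount p n k` = number of primitive `(n,k)` `p`-fountains. -/
noncomputable def gcount (p n k : ℕ) : ℕ :=
  Set.ncard {F : Fountain p | F.Primitive ∧ F.coins = n ∧ F.width = k}

/-- `hcount p n k` = number of non-primitive `(n,k)` `p`-fountains. -/
noncomputable def hcount (p n k : ℕ) : ℕ :=
  Set.ncard {F : Fountain p | ¬ F.Primitive ∧ F.coins = n ∧ F.width = k}

/-- The generating function `F(q,z) = ∑ f(n,k) qⁿ zᵏ`, where `q = X 0`, `z = X 1`. -/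
noncomputable def Fgf (p : ℕ) : MvPowerSeries (Fin 2) ℚ :=
  fun d => (fcount p (d 0) (d 1) : ℚ)

/-- The generating function `G(q,z) = ∑ g(n,k) qⁿ zᵏ` of primitive fountains. -/
noncomputable def Ggf (p : ℕ) : MvPowerSeries (Fin 2) ℚ :=
  fun d => (gcount p (d 0) (d 1) : ℚ)

/-- The generating function `H(q,z) = ∑ h(n,k) qⁿ zᵏ` of non-primitive fountains. -/
noncomputable def Hgf (p : ℕ) : MvPowerSeries (Fin 2) ℚ :=
  fun d => (hcount p (d 0) (d 1) : ℚ)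

/-- The substituted series `F(q, qz) = ∑ f(n,k) q^{n+k} z^k`. -/
noncomputable def Fqz (p : ℕ) : MvPowerSeries (Fin 2) ℚ :=
  fun d => if d 1 ≤ d 0 then (fcount p (d 0 - d 1) (d 1) : ℚ) else 0


namespace Fountain
variable {p : ℕ}

theorem ext' {F G : Fountain p} (h : F.rows = G.rows) : F = G := by
  cases F; cases G; simpa using h

theorem rows_zero (F : Fountain p) : F.rows 0 = Finset.range F.width :=
  F.bottom_consecutive

theorem rows_succ_subset (F : Fountain p) (i : ℕ) : F.rows (i + 1) ⊆ F.rows i := fun j hj => by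
  simpa using F.supported i j hj 0 (Nat.zero_le p)

theorem rows_subset (F : Fountain p) : ∀ i, F.rows i ⊆ Finset.range F.width
  | 0 => by rw [F.rows_zero]
  | (i + 1) => (F.rows_succ_subset i).trans (F.rows_subset i)

theorem mem_rows_one (F : Fountain p) {j : ℕ} (hj : j ∈ F.rows 1) : j + p < F.width := by
  have := F.supported 0 j hj p le_rfl
  rw [F.rows_zero] at this
  simpa using this

theorem rows_card (hp : 1 ≤ p) (F : Fountain p) :
    ∀ i, F.rows i = ∅ ∨ (F.rows i).card + i ≤ F.width := by
  intro i
  induction i with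
  | zero => exact Or.inr (by simp [width])
  | succ i ih =>
    by_cases h : F.rows (i + 1) = ∅
    · exact Or.inl h
    · right
      have hne : (F.rows (i + 1)).Nonempty := Finset.nonempty_iff_ne_empty.2 h
      set M := (F.rows (i + 1)).max' hne with hM
      have hMmem : M ∈ F.rows (i + 1) := (F.rows (i + 1)).max'_mem hne
      have h1 : M + 1 ∈ F.rows i := F.supported i M hMmem 1 hp
      have h2 : M + 1 ∉ F.rows (i + 1) := fun hmem =>
        absurd ((F.rows (i + 1)).le_max' _ hmem) (by omega)
      have hss : F.rows (i + 1) ⊂ F.rows i :=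
        ⟨F.rows_succ_subset i, fun hsub => h2 (hsub h1)⟩
      have hlt : (F.rows (i + 1)).card < (F.rows i).card := Finset.card_lt_card hss
      rcases ih with h' | h'
      · rw [h'] at hss; exact absurd hss.1 (by simp [Finset.subset_empty]; intro hh; exact h hh)
      · omega

theorem rows_eq_empty (hp : 1 ≤ p) (F : Fountain p) {i : ℕ} (h : F.width < i) :
    F.rows i = ∅ := by
  rcases rows_card hp F i with h' | h'
  · exact h'
  · have : (F.rows i).card = 0 := by omega
    exact Finset.card_eq_zero.1 this

theorem coins_eq (hp : 1 ≤ p) (F : Fountain p) {N : ℕ} (hN : F.width + 1 ≤ N) :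
    F.coins = ∑ i ∈ Finset.range N, (F.rows i).card := by
  refine Finset.sum_subset (Finset.range_subset_range.2 hN) fun i _ hi => ?_
  rw [Finset.mem_range, not_lt] at hi
  rw [rows_eq_empty hp F (by omega), Finset.card_empty]

theorem width_le_coins (F : Fountain p) : F.width ≤ F.coins := by
  have : (F.rows 0).card ≤ F.coins :=
    Finset.single_le_sum (f := fun i => (F.rows i).card) (fun _ _ => Nat.zero_le _)
      (Finset.mem_range.2 (by omega))
  simpa [width] using this

def trivialF (p k : ℕ) : Fountain p where
  rows := fun i => if i = 0 then Finset.range k else ∅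
  bottom_consecutive := by simp
  supported := by intro i j hj; simp at hj

@[simp] theorem trivialF_width (k : ℕ) : (trivialF p k).width = k := by
  simp [width, trivialF]

@[simp] theorem trivialF_coins (k : ℕ) : (trivialF p k).coins = k := by
  rw [coins, trivialF_width]
  rw [Finset.sum_eq_single_of_mem 0 (by simp) (fun b _ hb => by simp [trivialF, hb])]
  simp [trivialF]

theorem eq_trivialF (F : Fountain p) (h : F.width ≤ p) : F = trivialF p F.width := by
  have h1 : F.rows 1 = ∅ := by
    rw [Finset.eq_empty_iff_forall_notMem]
    intro j hj
    have := F.mem_rows_one hj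
    omega
  have hsucc : ∀ i, F.rows (i + 1) = ∅ := by
    intro i
    induction i with
    | zero => exact h1
    | succ i ih => exact Finset.subset_empty.1 (ih ▸ F.rows_succ_subset (i + 1))
  refine ext' (funext fun i => ?_)
  cases i with
  | zero => simpa [trivialF] using F.rows_zero
  | succ i => simpa [trivialF] using hsucc i

end Fountain

theorem fcount_small {p k : ℕ} (h : k ≤ p) (n : ℕ) :
    fcount p n k = if n = k then 1 else 0 := by
  unfold fcount
  split_ifs with hn
  · subst hn
    have : {F : Fountain p | F.coins = n ∧ F.width = n} = {Fountain.trivialF p n} := by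
      ext F
      simp only [Set.mem_setOf_eq, Set.mem_singleton_iff]
      constructor
      · rintro ⟨hc, hw⟩
        have := F.eq_trivialF (by omega)
        rw [hw] at this; exact this
      · rintro rfl; simp
    rw [this, Set.ncard_singleton]
  · have : {F : Fountain p | F.coins = n ∧ F.width = k} = ∅ := by
      ext F
      simp only [Set.mem_setOf_eq, Set.mem_empty_iff_false, iff_false]
      rintro ⟨hc, hw⟩
      have := F.eq_trivialF (by omega)
      apply hn
      rw [← hc, ← hw, this, hw]
      simp
    rw [this, Set.ncard_empty]

theorem Fountain.finite_width (hp : 1 ≤ p) (k : ℕ) :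
    {F : Fountain p | F.width = k}.Finite := by
  apply Set.Finite.of_finite_image (f := fun F =>
    (fun i : Fin (k + 1) => (⟨F.rows i ∩ Finset.range k,
      Finset.mem_powerset.2 Finset.inter_subset_right⟩ :
      {s : Finset ℕ // s ∈ (Finset.range k).powerset})))
  · exact Set.toFinite _
  · intro F hF G hG h
    simp only [Set.mem_setOf_eq] at hF hG
    have hrow : ∀ i, F.rows i = G.rows i := by
      intro i
      by_cases hi : i < k + 1
      · have := congrFun h ⟨i, hi⟩
        have h2 := congrArg Subtype.val this
        simp only at h2
        have hF' : F.rows i ∩ Finset.range k = F.rows i :=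
          Finset.inter_eq_left.2 (hF ▸ F.rows_subset i)
        have hG' : G.rows i ∩ Finset.range k = G.rows i :=
          Finset.inter_eq_left.2 (hG ▸ G.rows_subset i)
        rwa [hF', hG'] at h2
      · rw [rows_eq_empty hp F (by omega), rows_eq_empty hp G (by omega)]
    exact Fountain.ext' (funext hrow)

namespace Fountain
variable {p : ℕ}

/-! ### Gluing two fountains -/

def glue (P Q : Fountain p) (h : p ≤ Q.width + 1) : Fountain p where
  rows := fun i => match i with
    | 0 => Finset.range (P.width + 1 + Q.width)
    | (i + 1) => P.rows i ∪ (Q.rows (i + 1)).image (· + (P.width + 1))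
  bottom_consecutive := by simp
  supported := by
    intro i j hj d hd
    cases i with
    | zero =>
      simp only [Finset.mem_union, Finset.mem_image] at hj
      rcases hj with hj | ⟨q, hq, rfl⟩
      · have : j ∈ Finset.range P.width := P.rows_zero ▸ hj
        rw [Finset.mem_range] at this
        simp only [Finset.mem_range]
        omega
      · have : q + d ∈ Q.rows 0 := Q.supported 0 q hq d hd
        rw [Q.rows_zero, Finset.mem_range] at this
        simp only [Finset.mem_range]
        omega
    | succ i =>
      simp only [Finset.mem_union, Finset.mem_image] at hj ⊢
      rcases hj with hj | ⟨q, hq, rfl⟩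
      · exact Or.inl (P.supported i j hj d hd)
      · exact Or.inr ⟨q + d, Q.supported (i + 1) q hq d hd, by omega⟩

variable {P Q : Fountain p} {h : p ≤ Q.width + 1}

theorem glue_rows_zero : (glue P Q h).rows 0 = Finset.range (P.width + 1 + Q.width) := rfl

theorem glue_rows_succ (i : ℕ) :
    (glue P Q h).rows (i + 1) = P.rows i ∪ (Q.rows (i + 1)).image (· + (P.width + 1)) := rfl

@[simp] theorem glue_width : (glue P Q h).width = P.width + 1 + Q.width := by
  simp only [width, glue_rows_zero, Finset.card_range]

theorem glue_rows_succ_card (i : ℕ) :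
    ((glue P Q h).rows (i + 1)).card = (P.rows i).card + (Q.rows (i + 1)).card := by
  rw [glue_rows_succ]
  have hdisj : Disjoint (P.rows i) ((Q.rows (i + 1)).image (· + (P.width + 1))) := by
    rw [Finset.disjoint_left]
    intro a haP haQ
    have : a ∈ Finset.range P.width := P.rows_subset i haP
    rw [Finset.mem_range] at this
    simp only [Finset.mem_image] at haQ
    obtain ⟨q, _, rfl⟩ := haQ
    omega
  rw [Finset.card_union_of_disjoint hdisj,
    Finset.card_image_of_injective _ (add_left_injective _)]

theorem glue_coins (hp : 1 ≤ p) : (glue P Q h).coins = P.coins + P.width + 1 + Q.coins := by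
  set W := glue P Q h with hW
  have hw : W.width = P.width + 1 + Q.width := glue_width
  have h1 : W.coins = ∑ i ∈ Finset.range W.width, (W.rows (i + 1)).card + W.width := by
    rw [coins, Finset.sum_range_succ']
    congr 1
  have h2 : ∑ i ∈ Finset.range W.width, (W.rows (i + 1)).card
      = ∑ i ∈ Finset.range W.width, (P.rows i).card
        + ∑ i ∈ Finset.range W.width, (Q.rows (i + 1)).card := by
    rw [← Finset.sum_add_distrib]
    exact Finset.sum_congr rfl fun i _ => glue_rows_succ_card i
  have h3 : ∑ i ∈ Finset.range W.width, (P.rows i).card = P.coins :=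
    (P.coins_eq hp (by omega)).symm
  have h4 : ∑ i ∈ Finset.range W.width, (Q.rows (i + 1)).card + Q.width = Q.coins := by
    have := Q.coins_eq hp (N := W.width + 1) (by omega)
    rw [this, Finset.sum_range_succ']
    congr 1
  omega

end Fountain

namespace Fountain
variable {p : ℕ}

/-! ### Splitting a fountain at the first gap of row 1 -/

theorem gap_exists (F : Fountain p) : ∃ m, m ∉ F.rows 1 :=
  ⟨F.width, fun hh => by simpa using (Finset.mem_range.1 (F.rows_subset 1 hh))⟩

noncomputable def gapIdx (F : Fountain p) : ℕ := Nat.find F.gap_exists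

theorem gap_not_mem (F : Fountain p) : F.gapIdx ∉ F.rows 1 := Nat.find_spec F.gap_exists

theorem gap_min (F : Fountain p) {j : ℕ} (hj : j < F.gapIdx) : j ∈ F.rows 1 :=
  not_not.1 (Nat.find_min F.gap_exists hj)

theorem gap_le (F : Fountain p) (hk : p ≤ F.width) : F.gapIdx ≤ F.width - p := by
  apply Nat.find_le
  intro hmem
  have := F.mem_rows_one hmem
  omega

theorem gap_not_mem_rows (F : Fountain p) : ∀ t, F.gapIdx ∉ F.rows (t + 1) := by
  intro t
  induction t with
  | zero => exact F.gap_not_mem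
  | succ t ih => exact fun hh => ih (F.rows_succ_subset (t + 1) hh)

theorem rows_one_inter (F : Fountain p) :
    F.rows 1 ∩ Finset.range F.gapIdx = Finset.range F.gapIdx :=
  Finset.inter_eq_right.2 fun j hj => F.gap_min (Finset.mem_range.1 hj)

theorem left_support (F : Fountain p) {t j : ℕ} (hj : j ∈ F.rows (t + 2))
    (hjm : j < F.gapIdx) : j + p < F.gapIdx := by
  by_contra hcon
  have : F.gapIdx = j + (F.gapIdx - j) := by omega
  have hmem : F.gapIdx ∈ F.rows (t + 1) := by
    rw [this]
    exact F.supported (t + 1) j hj (F.gapIdx - j) (by omega)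
  exact F.gap_not_mem_rows t hmem

noncomputable def leftPart (F : Fountain p) : Fountain p where
  rows := fun i => F.rows (i + 1) ∩ Finset.range F.gapIdx
  bottom_consecutive := by
    show F.rows 1 ∩ Finset.range F.gapIdx
      = Finset.range (F.rows 1 ∩ Finset.range F.gapIdx).card
    rw [F.rows_one_inter, Finset.card_range]
  supported := by
    intro i j hj d hd
    simp only [Finset.mem_inter, Finset.mem_range] at hj ⊢
    obtain ⟨hj1, hj2⟩ := hj
    refine ⟨F.supported (i + 1) j hj1 d hd, ?_⟩
    have := F.left_support hj1 hj2
    omega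

@[simp] theorem leftPart_width (F : Fountain p) : F.leftPart.width = F.gapIdx := by
  show (F.rows 1 ∩ Finset.range F.gapIdx).card = _
  rw [F.rows_one_inter, Finset.card_range]

theorem leftPart_rows (F : Fountain p) (i : ℕ) :
    F.leftPart.rows i = F.rows (i + 1) ∩ Finset.range F.gapIdx := rfl

theorem image_filter_range (k c : ℕ) :
    ((Finset.range k).filter (fun x => c ≤ x)).image (· - c) = Finset.range (k - c) := by
  ext x
  simp only [Finset.mem_image, Finset.mem_filter, Finset.mem_range]
  constructor
  · rintro ⟨y, ⟨hy, hcy⟩, rfl⟩; omega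
  · intro hx; exact ⟨x + c, by omega, by omega⟩

noncomputable def rightPart (F : Fountain p) : Fountain p where
  rows := fun i => ((F.rows i).filter (fun x => F.gapIdx + 1 ≤ x)).image (· - (F.gapIdx + 1))
  bottom_consecutive := by
    show ((F.rows 0).filter (fun x => F.gapIdx + 1 ≤ x)).image (· - (F.gapIdx + 1))
      = Finset.range (((F.rows 0).filter (fun x => F.gapIdx + 1 ≤ x)).image
          (· - (F.gapIdx + 1))).card
    rw [F.rows_zero, image_filter_range, Finset.card_range]
  supported := by
    intro i j hj d hd
    simp only [Finset.mem_image, Finset.mem_filter] at hj ⊢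
    obtain ⟨y, ⟨hy, hy2⟩, rfl⟩ := hj
    exact ⟨y + d, ⟨F.supported i y hy d hd, by omega⟩, by omega⟩

theorem rightPart_rows (F : Fountain p) (i : ℕ) :
    F.rightPart.rows i
      = ((F.rows i).filter (fun x => F.gapIdx + 1 ≤ x)).image (· - (F.gapIdx + 1)) := rfl

@[simp] theorem rightPart_width (F : Fountain p) :
    F.rightPart.width = F.width - (F.gapIdx + 1) := by
  have h0 : F.rightPart.rows 0 = Finset.range (F.width - (F.gapIdx + 1)) := by
    rw [rightPart_rows, F.rows_zero, image_filter_range]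
  show (F.rightPart.rows 0).card = _
  rw [h0, Finset.card_range]

theorem glue_split (F : Fountain p) (hk : p ≤ F.width) (hp : 1 ≤ p)
    (h' : p ≤ F.rightPart.width + 1) :
    glue F.leftPart F.rightPart h' = F := by
  have hm : F.gapIdx ≤ F.width - p := F.gap_le hk
  apply ext'
  funext i
  cases i with
  | zero =>
    rw [glue_rows_zero, F.rows_zero, leftPart_width, rightPart_width]
    congr 1
    omega
  | succ i =>
    rw [glue_rows_succ, leftPart_rows, rightPart_rows, leftPart_width]
    ext x
    simp only [Finset.mem_union, Finset.mem_inter, Finset.mem_range, Finset.mem_image,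
      Finset.mem_filter]
    constructor
    · rintro (⟨hx, _⟩ | ⟨y, ⟨⟨z, ⟨hz, hz2⟩, rfl⟩, rfl⟩⟩)
      · exact hx
      · have : z - (F.gapIdx + 1) + (F.gapIdx + 1) = z := by omega
        rw [this]; exact hz
    · intro hx
      have hxm : x ≠ F.gapIdx := fun hh => F.gap_not_mem_rows i (hh ▸ hx)
      by_cases hlt : x < F.gapIdx
      · exact Or.inl ⟨hx, hlt⟩
      · exact Or.inr ⟨x - (F.gapIdx + 1), ⟨x, ⟨hx, by omega⟩, rfl⟩, by omega⟩

theorem gapIdx_glue {P Q : Fountain p} {h : p ≤ Q.width + 1} :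
    (glue P Q h).gapIdx = P.width := by
  have hrows : (glue P Q h).rows 1 = Finset.range P.width
      ∪ (Q.rows 1).image (· + (P.width + 1)) := by
    rw [glue_rows_succ, P.rows_zero]
  apply le_antisymm
  · apply Nat.find_le
    rw [hrows]
    simp only [Finset.mem_union, Finset.mem_range, Finset.mem_image]
    push_neg
    exact ⟨by omega, fun q _ => by omega⟩
  · rw [gapIdx, Nat.le_find_iff]
    intro j hj hnot
    apply hnot
    rw [hrows]
    simp only [Finset.mem_union, Finset.mem_range]
    exact Or.inl hj

theorem leftPart_glue {P Q : Fountain p} {h : p ≤ Q.width + 1} :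
    (glue P Q h).leftPart = P := by
  apply ext'
  funext i
  rw [leftPart_rows, gapIdx_glue, glue_rows_succ]
  ext x
  simp only [Finset.mem_inter, Finset.mem_union, Finset.mem_image, Finset.mem_range]
  constructor
  · rintro ⟨hx | ⟨q, _, rfl⟩, hlt⟩
    · exact hx
    · omega
  · intro hx
    have : x ∈ Finset.range P.width := P.rows_subset i hx
    rw [Finset.mem_range] at this
    exact ⟨Or.inl hx, this⟩

theorem rightPart_glue {P Q : Fountain p} {h : p ≤ Q.width + 1} :
    (glue P Q h).rightPart = Q := by
  apply ext'
  funext i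
  rw [rightPart_rows, gapIdx_glue]
  cases i with
  | zero =>
    rw [glue_rows_zero, image_filter_range, Q.rows_zero]
    congr 1
    omega
  | succ i =>
    rw [glue_rows_succ]
    ext x
    simp only [Finset.mem_image, Finset.mem_filter, Finset.mem_union]
    constructor
    · rintro ⟨y, ⟨hy | ⟨q, hq, rfl⟩, hge⟩, rfl⟩
      · have : y ∈ Finset.range P.width := P.rows_subset i hy
        rw [Finset.mem_range] at this
        omega
      · have : q + (P.width + 1) - (P.width + 1) = q := by omega
        rw [this]; exact hq
    · intro hx
      exact ⟨x + (P.width + 1), ⟨Or.inr ⟨x, hx, rfl⟩, by omega⟩, by omega⟩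

end Fountain

open Fountain

def wSet (p n k : ℕ) : Set (Fountain p) :=
  {W | W.coins = n ∧ W.width = k ∧ p ≤ W.width}

def aSet (p n1 k1 : ℕ) : Set (Fountain p) :=
  {P | P.coins + P.width + 1 = n1 ∧ P.width + 1 = k1}

def bSet (p n2 k2 : ℕ) : Set (Fountain p) :=
  {Q | Q.coins = n2 ∧ Q.width = k2 ∧ p ≤ Q.width + 1}

def tSet (p n k : ℕ) : Set (Fountain p × Fountain p) :=
  {PQ | PQ.1.coins + PQ.1.width + 1 + PQ.2.coins = n ∧ PQ.1.width + 1 + PQ.2.width = k ∧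
    p ≤ PQ.2.width + 1}

theorem split_bijOn (hp : 1 ≤ p) (n k : ℕ) :
    Set.BijOn (fun W : Fountain p => (W.leftPart, W.rightPart)) (wSet p n k) (tSet p n k) := by
  have hright : ∀ W : Fountain p, p ≤ W.width → p ≤ W.rightPart.width + 1 := by
    intro W hk
    have := W.gap_le hk
    rw [rightPart_width]
    omega
  constructor
  · -- MapsTo
    rintro W ⟨hc, hw, hk⟩
    have h' := hright W hk
    have hg := W.glue_split hk hp h'
    have hco : W.leftPart.coins + W.leftPart.width + 1 + W.rightPart.coins = W.coins := by
      conv_rhs => rw [← hg]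
      rw [glue_coins hp]
    have hwi : W.leftPart.width + 1 + W.rightPart.width = W.width := by
      conv_rhs => rw [← hg]
      rw [glue_width]
    exact ⟨by rw [hco, hc], by rw [hwi, hw], h'⟩
  constructor
  · -- InjOn
    rintro W ⟨_, _, hk⟩ W' ⟨_, _, hk'⟩ heq
    simp only [Prod.mk.injEq] at heq
    have h1 := W.glue_split hk hp (hright W hk)
    have h2 := W'.glue_split hk' hp (hright W' hk')
    rw [← h1, ← h2]
    congr 1
    · exact heq.1
    · exact heq.2
  · -- SurjOn
    rintro ⟨P, Q⟩ ⟨hc, hw, hq⟩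
    refine ⟨glue P Q hq, ⟨?_, ?_, ?_⟩, ?_⟩
    · rw [glue_coins hp, hc]
    · rw [glue_width, hw]
    · rw [glue_width]
      have hq' : p ≤ Q.width + 1 := hq
      omega
    · simp only [Prod.mk.injEq]
      exact ⟨leftPart_glue, rightPart_glue⟩

theorem ncard_prod' {α β : Type*} (s : Set α) (t : Set β) :
    (s ×ˢ t).ncard = s.ncard * t.ncard := by
  rw [← Nat.card_coe_set_eq, ← Nat.card_coe_set_eq, ← Nat.card_coe_set_eq,
    Nat.card_congr (Equiv.Set.prod s t), Nat.card_prod]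

theorem finite_width_le (hp : 1 ≤ p) (k : ℕ) : {F : Fountain p | F.width ≤ k}.Finite := by
  have : {F : Fountain p | F.width ≤ k} = ⋃ j ∈ Finset.range (k + 1), {F | F.width = j} := by
    ext F; simp [Nat.lt_succ_iff]
  rw [this]
  exact Set.Finite.biUnion (Finset.range (k + 1)).finite_toSet
    fun j _ => Fountain.finite_width hp j

theorem tSet_finite (hp : 1 ≤ p) (n k : ℕ) : (tSet p n k).Finite := by
  apply ((finite_width_le hp k).prod (finite_width_le hp k)).subset
  intro PQ hPQ
  obtain ⟨hc, hw, hq⟩ := hPQ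
  exact ⟨show PQ.1.width ≤ k by omega, show PQ.2.width ≤ k by omega⟩

theorem key_count (hp : 1 ≤ p) (n k : ℕ) :
    (wSet p n k).ncard = ∑ x ∈ Finset.HasAntidiagonal.antidiagonal n ×ˢ Finset.HasAntidiagonal.antidiagonal k,
      (aSet p x.1.1 x.2.1).ncard * (bSet p x.1.2 x.2.2).ncard := by
  have hbij := split_bijOn hp n k
  have h1 : (wSet p n k).ncard = (tSet p n k).ncard := by
    rw [← hbij.image_eq, Set.ncard_image_of_injOn hbij.injOn]
  rw [h1]
  have hfin := tSet_finite hp n k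
  rw [Set.ncard_eq_toFinset_card _ hfin]
  rw [Finset.card_eq_sum_card_fiberwise
    (f := fun PQ : Fountain p × Fountain p =>
      ((PQ.1.coins + PQ.1.width + 1, PQ.2.coins), (PQ.1.width + 1, PQ.2.width)))
    (t := Finset.HasAntidiagonal.antidiagonal n ×ˢ Finset.HasAntidiagonal.antidiagonal k)
    (fun PQ hPQ => by
      rw [Finset.mem_coe, Set.Finite.mem_toFinset] at hPQ
      obtain ⟨hc, hw, _⟩ := hPQ
      simp only [Finset.mem_coe, Finset.mem_product, Finset.HasAntidiagonal.mem_antidiagonal]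
      exact ⟨hc, hw⟩)]
  refine Finset.sum_congr rfl fun x hx => ?_
  obtain ⟨⟨n1, n2⟩, ⟨k1, k2⟩⟩ := x
  simp only [Finset.mem_product, Finset.HasAntidiagonal.mem_antidiagonal] at hx
  have hset : ↑(hfin.toFinset.filter (fun PQ : Fountain p × Fountain p =>
      ((PQ.1.coins + PQ.1.width + 1, PQ.2.coins), (PQ.1.width + 1, PQ.2.width))
        = ((n1, n2), (k1, k2)))) = aSet p n1 k1 ×ˢ bSet p n2 k2 := by
    ext PQ
    simp only [Finset.coe_filter, Set.Finite.mem_toFinset, Set.mem_setOf_eq, Prod.mk.injEq,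
      Set.mem_prod, aSet, bSet, tSet]
    constructor
    · rintro ⟨⟨_, _, hq⟩, ⟨⟨e1, e2⟩, ⟨e3, e4⟩⟩⟩
      exact ⟨⟨e1, e3⟩, ⟨e2, e4, by omega⟩⟩
    · rintro ⟨⟨e1, e3⟩, ⟨e2, e4, hq⟩⟩
      exact ⟨⟨by omega, by omega, by omega⟩, ⟨⟨e1, e2⟩, ⟨e3, e4⟩⟩⟩
  calc (hfin.toFinset.filter _).card
      = (↑(hfin.toFinset.filter (fun PQ : Fountain p × Fountain p =>
          ((PQ.1.coins + PQ.1.width + 1, PQ.2.coins), (PQ.1.width + 1, PQ.2.width))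
            = ((n1, n2), (k1, k2)))) : Set (Fountain p × Fountain p)).ncard := by
        rw [Set.ncard_coe_finset]
    _ = (aSet p n1 k1 ×ˢ bSet p n2 k2).ncard := by rw [hset]
    _ = (aSet p n1 k1).ncard * (bSet p n2 k2).ncard := ncard_prod' _ _

/-! ### Cardinality computations -/

theorem wSet_ncard (hp : 1 ≤ p) (n k : ℕ) :
    ((wSet p n k).ncard : ℚ)
      = (fcount p n k : ℚ) - (if n = k ∧ k < p then 1 else 0) := by
  by_cases hk : p ≤ k
  · have hw : wSet p n k = {F : Fountain p | F.coins = n ∧ F.width = k} := by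
      ext F
      simp only [wSet, Set.mem_setOf_eq]
      constructor
      · rintro ⟨h1, h2, _⟩; exact ⟨h1, h2⟩
      · rintro ⟨h1, h2⟩; exact ⟨h1, h2, by omega⟩
    rw [hw, if_neg (by omega)]
    simp [fcount]
  · have h0 : wSet p n k = ∅ := by
      ext F
      simp only [wSet, Set.mem_setOf_eq, Set.mem_empty_iff_false, iff_false, not_and]
      intro _ h2
      omega
    rw [h0, Set.ncard_empty, fcount_small (by omega : k ≤ p)]
    have hklt : k < p := by omega
    by_cases hn : n = k <;> simp [hn, hklt]

theorem bSet_ncard (hp : 1 ≤ p) (n2 k2 : ℕ) :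
    ((bSet p n2 k2).ncard : ℚ)
      = (fcount p n2 k2 : ℚ) - (if n2 = k2 ∧ k2 + 1 < p then 1 else 0) := by
  by_cases hk : p ≤ k2 + 1
  · have hw : bSet p n2 k2 = {F : Fountain p | F.coins = n2 ∧ F.width = k2} := by
      ext F
      simp only [bSet, Set.mem_setOf_eq]
      constructor
      · rintro ⟨h1, h2, _⟩; exact ⟨h1, h2⟩
      · rintro ⟨h1, h2⟩; exact ⟨h1, h2, by omega⟩
    rw [hw, if_neg (by omega)]
    simp [fcount]
  · have h0 : bSet p n2 k2 = ∅ := by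
      ext F
      simp only [bSet, Set.mem_setOf_eq, Set.mem_empty_iff_false, iff_false, not_and]
      intro _ h2
      omega
    rw [h0, Set.ncard_empty, fcount_small (by omega : k2 ≤ p)]
    have hklt : k2 + 1 < p := by omega
    by_cases hn : n2 = k2 <;> simp [hn, hklt]

theorem aSet_ncard (n1 k1 : ℕ) :
    ((aSet p n1 k1).ncard : ℚ)
      = if 1 ≤ k1 ∧ k1 ≤ n1 then (fcount p (n1 - k1) (k1 - 1) : ℚ) else 0 := by
  split_ifs with h
  · have hw : aSet p n1 k1 = {F : Fountain p | F.coins = n1 - k1 ∧ F.width = k1 - 1} := by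
      ext F
      simp only [aSet, Set.mem_setOf_eq]
      constructor
      · rintro ⟨h1, h2⟩; constructor <;> omega
      · rintro ⟨h1, h2⟩; constructor <;> omega
    rw [hw]
    simp [fcount]
  · have h0 : aSet p n1 k1 = ∅ := by
      ext F
      simp only [aSet, Set.mem_setOf_eq, Set.mem_empty_iff_false, iff_false, not_and]
      intro h1 h2
      omega
    rw [h0, Set.ncard_empty, Nat.cast_zero]

/-! ### Power series coefficients -/

open MvPowerSeries Finsupp

theorem finsupp_fin2_eq (d : Fin 2 →₀ ℕ) : d = single 0 (d 0) + single 1 (d 1) := by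
  ext j
  fin_cases j <;> simp [Finsupp.single_apply]

theorem eq_single_iff (d : Fin 2 →₀ ℕ) (a b : ℕ) :
    d = single 0 a + single 1 b ↔ d 0 = a ∧ d 1 = b := by
  constructor
  · rintro rfl
    simp [Finsupp.single_apply]
  · rintro ⟨h1, h2⟩
    rw [finsupp_fin2_eq d, h1, h2]

theorem coeff_Fgf (d : Fin 2 →₀ ℕ) :
    (MvPowerSeries.coeff d) (Fgf p) = (fcount p (d 0) (d 1) : ℚ) := by
  rw [MvPowerSeries.coeff_apply]; rfl

theorem coeff_Apow (i : ℕ) (d : Fin 2 →₀ ℕ) :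
    (MvPowerSeries.coeff d) ((X 0 * X 1 : MvPowerSeries (Fin 2) ℚ) ^ i)
      = if d 0 = i ∧ d 1 = i then 1 else 0 := by
  rw [mul_pow, X_pow_eq, X_pow_eq, monomial_mul_monomial, one_mul, coeff_monomial]
  simp only [eq_single_iff]

theorem coeff_geom (r : ℕ) (d : Fin 2 →₀ ℕ) :
    (MvPowerSeries.coeff d) (∑ i ∈ Finset.range r, (X 0 * X 1 : MvPowerSeries (Fin 2) ℚ) ^ i)
      = if d 0 = d 1 ∧ d 0 < r then 1 else 0 := by
  rw [map_sum]
  simp only [coeff_Apow]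
  have h1 : ∀ i, (if d 0 = i ∧ d 1 = i then (1 : ℚ) else 0)
      = if i = d 0 then (if d 0 = d 1 then (1 : ℚ) else 0) else 0 := by
    intro i
    split_ifs <;> first | rfl | (exfalso; omega)
  rw [Finset.sum_congr rfl fun i _ => h1 i, Finset.sum_ite_eq' (Finset.range r) (d 0)]
  simp only [Finset.mem_range]
  split_ifs <;> first | rfl | (exfalso; omega)

theorem coeff_AFqz (d : Fin 2 →₀ ℕ) :
    (MvPowerSeries.coeff d) (X 0 * X 1 * Fqz p)
      = if 1 ≤ d 1 ∧ d 1 ≤ d 0 then (fcount p (d 0 - d 1) (d 1 - 1) : ℚ) else 0 := by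
  set e : Fin 2 →₀ ℕ := single 0 1 + single 1 1 with he
  have hA : (X 0 * X 1 : MvPowerSeries (Fin 2) ℚ) = monomial e 1 := by
    rw [X_def, X_def, monomial_mul_monomial, one_mul]
  rw [hA, coeff_monomial_mul]
  have hle : e ≤ d ↔ 1 ≤ d 0 ∧ 1 ≤ d 1 := by
    rw [he]
    rw [Finsupp.le_def]
    constructor
    · intro hj
      constructor
      · have := hj 0; simpa [Finsupp.single_apply] using this
      · have := hj 1; simpa [Finsupp.single_apply] using this
    · rintro ⟨h1, h2⟩ j
      fin_cases j <;> simp [Finsupp.single_apply] <;> omega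
  have he0 : (d - e) 0 = d 0 - 1 := by
    rw [Finsupp.tsub_apply, he]; simp [Finsupp.single_apply]
  have he1 : (d - e) 1 = d 1 - 1 := by
    rw [Finsupp.tsub_apply, he]; simp [Finsupp.single_apply]
  have hco : (MvPowerSeries.coeff (d - e)) (Fqz p)
      = if d 1 - 1 ≤ d 0 - 1 then (fcount p ((d 0 - 1) - (d 1 - 1)) (d 1 - 1) : ℚ) else 0 := by
    rw [MvPowerSeries.coeff_apply]
    show (if _ then _ else _) = _
    rw [he0, he1]
  by_cases h : 1 ≤ d 0 ∧ 1 ≤ d 1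
  · rw [if_pos (hle.2 h), one_mul, hco]
    split_ifs with h2 h3
    · have harg : d 0 - 1 - (d 1 - 1) = d 0 - d 1 := by omega
      rw [harg]
    · exfalso; omega
    · exfalso; omega
    · rfl
  · rw [if_neg (fun hc => h (hle.1 hc)), if_neg (by omega)]

theorem antidiag_conv (d : Fin 2 →₀ ℕ) (g : ℕ × ℕ → ℕ × ℕ → ℚ) :
    ∑ x ∈ Finset.HasAntidiagonal.antidiagonal d, g (x.1 0, x.2 0) (x.1 1, x.2 1)
      = ∑ y ∈ Finset.HasAntidiagonal.antidiagonal (d 0) ×ˢ Finset.HasAntidiagonal.antidiagonal (d 1), g y.1 y.2 := by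
  apply Finset.sum_nbij' (i := fun x : (Fin 2 →₀ ℕ) × (Fin 2 →₀ ℕ) =>
      ((x.1 0, x.2 0), (x.1 1, x.2 1)))
    (j := fun y : (ℕ × ℕ) × (ℕ × ℕ) =>
      (single 0 y.1.1 + single 1 y.2.1, single 0 y.1.2 + single 1 y.2.2))
  · intro x hx
    rw [Finset.HasAntidiagonal.mem_antidiagonal] at hx
    have h0 : x.1 0 + x.2 0 = d 0 := by rw [← Finsupp.add_apply, hx]
    have h1 : x.1 1 + x.2 1 = d 1 := by rw [← Finsupp.add_apply, hx]
    simp only [Finset.mem_product, Finset.HasAntidiagonal.mem_antidiagonal]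
    exact ⟨h0, h1⟩
  · intro y hy
    simp only [Finset.mem_product, Finset.HasAntidiagonal.mem_antidiagonal] at hy
    rw [Finset.HasAntidiagonal.mem_antidiagonal]
    have : (single (0 : Fin 2) y.1.1 + single 1 y.2.1) + (single 0 y.1.2 + single 1 y.2.2)
        = single 0 (y.1.1 + y.1.2) + single 1 (y.2.1 + y.2.2) := by
      rw [Finsupp.single_add, Finsupp.single_add]; abel
    rw [this, hy.1, hy.2, ← finsupp_fin2_eq]
  · intro x _
    exact Prod.ext (finsupp_fin2_eq x.1).symm (finsupp_fin2_eq x.2).symm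
  · intro y _
    simp [Finsupp.single_apply]
  · intro x _
    rfl

theorem antidiag_conv' (d : Fin 2 →₀ ℕ) :
    ∑ x ∈ Finset.HasAntidiagonal.antidiagonal d,
        ((aSet p (x.1 0) (x.1 1)).ncard : ℚ) * ((bSet p (x.2 0) (x.2 1)).ncard : ℚ)
      = ∑ y ∈ Finset.HasAntidiagonal.antidiagonal (d 0) ×ˢ Finset.HasAntidiagonal.antidiagonal (d 1),
        ((aSet p y.1.1 y.2.1).ncard : ℚ) * ((bSet p y.1.2 y.2.2).ncard : ℚ) :=
  antidiag_conv d (fun y1 y2 => ((aSet p y1.1 y2.1).ncard : ℚ) * ((bSet p y1.2 y2.2).ncard : ℚ))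

theorem master (hp : 1 ≤ p) :
    Fgf p = (∑ i ∈ Finset.range p, (X 0 * X 1 : MvPowerSeries (Fin 2) ℚ) ^ i)
      + (X 0 * X 1 * Fqz p)
        * (Fgf p - ∑ i ∈ Finset.range (p - 1), (X 0 * X 1 : MvPowerSeries (Fin 2) ℚ) ^ i) := by
  ext d
  rw [map_add, MvPowerSeries.coeff_mul, coeff_Fgf, coeff_geom]
  have hsummand : ∀ x ∈ Finset.HasAntidiagonal.antidiagonal d,
      (MvPowerSeries.coeff x.1) (X 0 * X 1 * Fqz p)
        * (MvPowerSeries.coeff x.2)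
          (Fgf p - ∑ i ∈ Finset.range (p - 1), (X 0 * X 1 : MvPowerSeries (Fin 2) ℚ) ^ i)
      = ((aSet p (x.1 0) (x.1 1)).ncard : ℚ) * ((bSet p (x.2 0) (x.2 1)).ncard : ℚ) := by
    intro x _
    rw [coeff_AFqz, map_sub, coeff_Fgf, coeff_geom, aSet_ncard, bSet_ncard hp]
    congr 1
    congr 1
    apply if_congr _ rfl rfl
    constructor
    · rintro ⟨h1, h2⟩; exact ⟨h1, by omega⟩
    · rintro ⟨h1, h2⟩; exact ⟨h1, by omega⟩
  rw [Finset.sum_congr rfl hsummand, antidiag_conv']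
  have hkey : (∑ y ∈ Finset.HasAntidiagonal.antidiagonal (d 0) ×ˢ Finset.HasAntidiagonal.antidiagonal (d 1),
      ((aSet p y.1.1 y.2.1).ncard : ℚ) * ((bSet p y.1.2 y.2.2).ncard : ℚ))
      = ((wSet p (d 0) (d 1)).ncard : ℚ) := by
    rw [key_count hp (d 0) (d 1)]
    push_cast
    rfl
  rw [hkey, wSet_ncard hp]
  split_ifs with h1 h2 h3
  · ring
  · exact absurd ⟨h1.1, h1.1 ▸ h1.2⟩ h2
  · exact absurd ⟨h3.1, h3.1 ▸ h3.2⟩ h1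
  · ring


open MvPowerSeries in
/-- The closed recursive form of the generating function of `p`-fountains:
`F(q,z) = (qz)^{p-1} / (1 - qz F(q,qz)) + (1 - (qz)^{p-1}) / (1 - qz)`,
as formal power series (`Fqz p` is the substituted series `F(q,qz)`). -/
theorem fountain_closed_form (p : ℕ) (hp : 1 ≤ p) :
    Fgf p = (X 0 * X 1) ^ (p - 1) * (1 - X 0 * X 1 * Fqz p)⁻¹ +
      (1 - (X 0 * X 1) ^ (p - 1)) * (1 - X 0 * X 1)⁻¹ := by

  set A : MvPowerSeries (Fin 2) ℚ := X 0 * X 1 with hA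
  set U : MvPowerSeries (Fin 2) ℚ := 1 - A * Fqz p with hU
  set V : MvPowerSeries (Fin 2) ℚ := 1 - A with hV
  have hCA : constantCoeff A = 0 := by
    rw [hA, map_mul, constantCoeff_X, zero_mul]
  have hCU : constantCoeff U = 1 := by
    rw [hU, map_sub, map_one, map_mul, hCA, zero_mul, sub_zero]
  have hCV : constantCoeff V = 1 := by
    rw [hV, map_sub, map_one, hCA, sub_zero]
  have hU1 : U * U⁻¹ = 1 := MvPowerSeries.mul_inv_cancel _ (by rw [hCU]; exact one_ne_zero)
  have hV1 : V * V⁻¹ = 1 := MvPowerSeries.mul_inv_cancel _ (by rw [hCV]; exact one_ne_zero)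
  have hg1 : (∑ i ∈ Finset.range p, A ^ i) * V = 1 - A ^ p := by
    have := geom_sum_mul A p
    rw [hV]
    linear_combination -this
  have hg2 : (∑ i ∈ Finset.range (p - 1), A ^ i) * V = 1 - A ^ (p - 1) := by
    have := geom_sum_mul A (p - 1)
    rw [hV]
    linear_combination -this
  have hpow : A ^ (p - 1) * A = A ^ p := by
    rw [← pow_succ]
    congr 1
    omega
  have hm := master hp
  rw [← hA] at hm
  have key : Fgf p * U * V = A ^ (p - 1) * V + (1 - A ^ (p - 1)) * U := by
    rw [hU, hV]
    linear_combination (1 - A) * hm + hg1 - (A * Fqz p) * hg2 + hpow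
  calc Fgf p = Fgf p * 1 * 1 := by ring
    _ = Fgf p * (U * U⁻¹) * (V * V⁻¹) := by rw [hU1, hV1]
    _ = (Fgf p * U * V) * U⁻¹ * V⁻¹ := by ring
    _ = (A ^ (p - 1) * V + (1 - A ^ (p - 1)) * U) * U⁻¹ * V⁻¹ := by rw [key]
    _ = A ^ (p - 1) * (V * V⁻¹) * U⁻¹ + (1 - A ^ (p - 1)) * (U * U⁻¹) * V⁻¹ := by ring
    _ = A ^ (p - 1) * U⁻¹ + (1 - A ^ (p - 1)) * V⁻¹ := by rw [hU1, hV1]; ring
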